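/- Let t ≥ 1 be an integer, let α be a root of the irreducible polynomial f(X) = X³ − 27tX − 1, and let K = ℚ(α). Then no rational prime p is totally ramified in K. -/

import Mathlib

set_option synthInstance.maxHeartbeats 1000000
set_option maxHeartbeats 1000000

open NumberField Ideal Polynomial

section Aux

variable {K : Type} [Field K] [NumberField K]

/-- If `p𝓞 = P^3` and `J` is a nonzero ideal not contained in `P`, then `p ∤ N(J)`. -/
lemma aux_not_dvd_absNorm (p : ℕ) (hp : p.Prime) (P J : Ideal (𝓞 K))
    (hPm : P.IsMaximal) (hP3 : Ideal.span {(p : 𝓞 K)} = P ^ 3)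
    (hJ : J ≠ ⊥) (hJP : ¬ J ≤ P) : ¬ (p ∣ Ideal.absNorm J) := by
  intro hdvd
  haveI : Fact p.Prime := ⟨hp⟩
  letI := @Fintype.ofFinite _ (Ideal.finiteQuotientOfFreeOfNeBot J hJ)
  have hcard : p ∣ Fintype.card (𝓞 K ⧸ J) := by
    rwa [← Nat.card_eq_fintype_card, ← Submodule.cardQuot_apply, ← Ideal.absNorm_apply]
  obtain ⟨y, hy⟩ := exists_prime_addOrderOf_dvd_card p hcard
  obtain ⟨x, rfl⟩ := Ideal.Quotient.mk_surjective y
  have hxJ : x ∉ J := by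
    intro h
    rw [Ideal.Quotient.eq_zero_iff_mem.mpr h, addOrderOf_zero] at hy
    exact hp.one_lt.ne' hy.symm
  have hpx : (p : 𝓞 K) * x ∈ J := by
    have h0 := addOrderOf_nsmul_eq_zero (Ideal.Quotient.mk J x)
    rw [hy] at h0
    have : Ideal.Quotient.mk J ((p : 𝓞 K) * x) = 0 := by
      rw [_root_.map_mul, map_natCast, ← nsmul_eq_mul, h0]
    exact Ideal.Quotient.eq_zero_iff_mem.mp this
  have hsup : P ⊔ J = ⊤ := by
    by_contra hne
    have hPP : P = P ⊔ J := hPm.eq_of_le hne le_sup_left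
    exact hJP (le_trans le_sup_right hPP.symm.le)
  have hsup3 : P ^ 3 ⊔ J = ⊤ :=
    Ideal.isCoprime_iff_sup_eq.mp ((Ideal.isCoprime_iff_sup_eq.mpr hsup).pow_left)
  rw [← hP3] at hsup3
  have h1 : (1 : 𝓞 K) ∈ Ideal.span {(p : 𝓞 K)} ⊔ J := by rw [hsup3]; trivial
  obtain ⟨ρ, hρ, j, hj, hsum⟩ := Submodule.mem_sup.mp h1
  obtain ⟨z, hz⟩ := Ideal.mem_span_singleton'.mp hρ
  apply hxJ
  have hxx : z * ((p : 𝓞 K) * x) + x * j = x := by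
    rw [← hz] at hsum
    linear_combination x * hsum
  rw [← hxx]
  exact J.add_mem (J.mul_mem_left z hpx) (J.mul_mem_left x hj)

lemma aux_val_mul (P : Ideal (𝓞 K)) (hP : Prime P) {x y : 𝓞 K} {m n : ℕ}
    (hx : x ∈ P ^ m) (hx' : x ∉ P ^ (m + 1)) (hy : y ∈ P ^ n) (hy' : y ∉ P ^ (n + 1)) :
    x * y ∈ P ^ (m + n) ∧ x * y ∉ P ^ (m + n + 1) := by
  obtain ⟨Jx, hJx⟩ := Ideal.dvd_span_singleton.mpr hx
  obtain ⟨Jy, hJy⟩ := Ideal.dvd_span_singleton.mpr hy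
  have hPJx : ¬ P ∣ Jx := by
    rintro ⟨c, hc⟩
    exact hx' (Ideal.dvd_span_singleton.mp ⟨c, by rw [hJx, hc]; ring⟩)
  have hPJy : ¬ P ∣ Jy := by
    rintro ⟨c, hc⟩
    exact hy' (Ideal.dvd_span_singleton.mp ⟨c, by rw [hJy, hc]; ring⟩)
  have hspan : Ideal.span {x * y} = P ^ (m + n) * (Jx * Jy) := by
    rw [← Ideal.span_singleton_mul_span_singleton, hJx, hJy]; ring
  constructor
  · exact Ideal.dvd_span_singleton.mp ⟨Jx * Jy, hspan⟩
  · intro hmem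
    obtain ⟨c, hc⟩ := Ideal.dvd_span_singleton.mpr hmem
    have hPn0 : P ^ (m + n) ≠ 0 := pow_ne_zero _ hP.ne_zero
    have : P ∣ Jx * Jy := by
      refine ⟨P ^ 0 * c, mul_left_cancel₀ hPn0 ?_⟩
      rw [← hspan, hc]; ring
    rcases hP.2.2 _ _ this with h | h
    exacts [hPJx h, hPJy h]

lemma aux_val_exists (P : Ideal (𝓞 K)) (hP : Prime P) {x : 𝓞 K} (hx : x ≠ 0) :
    ∃ m : ℕ, x ∈ P ^ m ∧ x ∉ P ^ (m + 1) := by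
  have hsp : Ideal.span {x} ≠ 0 := by
    simpa [Ideal.zero_eq_bot, Ideal.span_singleton_eq_bot] using hx
  obtain ⟨c, hc, hPc⟩ :=
    (FiniteMultiplicity.of_prime_left hP hsp).exists_eq_pow_mul_and_not_dvd
  set m := multiplicity P (Ideal.span {x}) with hm
  clear_value m
  refine ⟨m, Ideal.dvd_span_singleton.mp ⟨c, hc⟩, ?_⟩
  intro hmem
  obtain ⟨e, he⟩ := Ideal.dvd_span_singleton.mpr hmem
  have hPn0 : P ^ m ≠ 0 := pow_ne_zero _ hP.ne_zero
  apply hPc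
  refine ⟨e, mul_left_cancel₀ hPn0 ?_⟩
  calc P ^ m * c = P ^ m * (P * e) := by rw [← hc, he]; ring


lemma aux_res_int (p : ℕ) (hp : p.Prime) (P : Ideal (𝓞 K)) (hPp : P.IsPrime)
    (hP3 : Ideal.span {(p : 𝓞 K)} = P ^ 3) :
    ∀ n : ℤ, ((n : 𝓞 K) ∈ P ↔ (p : ℤ) ∣ n) := by
  have hpP : ((p : ℕ) : 𝓞 K) ∈ P := by
    have : ((p : ℕ) : 𝓞 K) ∈ P ^ 3 := by
      rw [← hP3]; exact Ideal.subset_span rfl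
    exact Ideal.pow_le_self (by norm_num) this
  intro n
  constructor
  · intro h
    by_contra hnd
    have hgcd : Int.gcd (p : ℤ) n = 1 := by
      rw [Int.gcd]
      simp only [Int.natAbs_natCast]
      exact (Nat.Prime.coprime_iff_not_dvd hp).mpr (fun hd => hnd (Int.natCast_dvd.mpr hd))
    obtain ⟨a, b, hab⟩ := Int.isCoprime_iff_gcd_eq_one.mpr hgcd
    have h1 : (1 : 𝓞 K) ∈ P := by
      have hcast : ((a * p + b * n : ℤ) : 𝓞 K) = (1 : 𝓞 K) := by
        rw [hab]; norm_cast
      rw [← hcast]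
      push_cast
      exact P.add_mem (P.mul_mem_left _ hpP) (P.mul_mem_left _ h)
    exact hPp.ne_top ((Ideal.eq_top_iff_one P).mpr h1)
  · rintro ⟨c, rfl⟩
    push_cast
    exact P.mul_mem_right _ hpP

lemma aux_int_val (p : ℕ) (hp : p.Prime) (P : Ideal (𝓞 K)) (hPp : P.IsPrime) (hP : Prime P)
    (hP3 : Ideal.span {(p : 𝓞 K)} = P ^ 3)
    (n : ℤ) (k : ℕ) (h1 : (p : ℤ) ^ k ∣ n) (h2 : ¬ (p : ℤ) ^ (k + 1) ∣ n) :
    ((n : 𝓞 K) ∈ P ^ (3 * k) ∧ (n : 𝓞 K) ∉ P ^ (3 * k + 1)) := by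
  obtain ⟨u, rfl⟩ := h1
  have hpu : ¬ (p : ℤ) ∣ u := by
    rintro ⟨v, rfl⟩
    exact h2 ⟨v, by ring⟩
  have hres := aux_res_int p hp P hPp hP3
  have hppow : ((p : ℤ) ^ k : ℤ) = ((p ^ k : ℕ) : ℤ) := by push_cast; ring
  have hspan : Ideal.span {((p : ℕ) : 𝓞 K) ^ k} = P ^ (3 * k) := by
    rw [← Ideal.span_singleton_pow, hP3, ← pow_mul, mul_comm]
  have hEp1 : ((p : ℕ) : 𝓞 K) ^ k ∈ P ^ (3 * k) := by
    rw [← hspan]; exact Ideal.subset_span rfl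
  have hEp2 : ((p : ℕ) : 𝓞 K) ^ k ∉ P ^ (3 * k + 1) := by
    intro hmem
    obtain ⟨c, hc⟩ := Ideal.dvd_span_singleton.mpr hmem
    rw [hspan] at hc
    have hPn0 : P ^ (3 * k) ≠ 0 := pow_ne_zero _ hP.ne_zero
    have hunit : P * c = 1 := by
      apply mul_left_cancel₀ hPn0
      calc P ^ (3 * k) * (P * c) = P ^ (3 * k + 1) * c := by ring
        _ = P ^ (3 * k) * 1 := by rw [← hc, mul_one]
    exact hP.not_isUnit (IsUnit.of_mul_eq_one _ hunit)
  have hEu1 : ((u : ℤ) : 𝓞 K) ∈ P ^ 0 := by simp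
  have hEu2 : ((u : ℤ) : 𝓞 K) ∉ P ^ (0 + 1) := by
    simpa [pow_one] using fun h => hpu ((hres u).mp h)
  have hcast : (((p : ℤ) ^ k * u : ℤ) : 𝓞 K) = ((p : ℕ) : 𝓞 K) ^ k * ((u : ℤ) : 𝓞 K) := by
    push_cast; ring
  have := aux_val_mul P hP hEp1 hEp2 hEu1 hEu2
  rw [← hcast] at this
  simpa using this

lemma aux_NF (p : ℕ) (hp : p.Prime) (P : Ideal (𝓞 K)) (hP : Prime P)
    (hPm : P.IsMaximal) (hP3 : Ideal.span {(p : 𝓞 K)} = P ^ 3)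
    (hNp : Ideal.absNorm P = p) {x : 𝓞 K} {k : ℕ}
    (h1 : x ∈ P ^ k) (h2 : x ∉ P ^ (k + 1)) :
    p ^ k ∣ (Algebra.norm ℤ x).natAbs ∧ ¬ p ^ (k + 1) ∣ (Algebra.norm ℤ x).natAbs := by
  have hx0 : x ≠ 0 := fun h => h2 (h ▸ zero_mem _)
  obtain ⟨J, hJ⟩ := Ideal.dvd_span_singleton.mpr h1
  have hPJ : ¬ P ∣ J := by
    rintro ⟨c, hc⟩
    exact h2 (Ideal.dvd_span_singleton.mp ⟨c, by rw [hJ, hc]; ring⟩)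
  have hsp : Ideal.span {x} ≠ 0 := by
    simpa [Ideal.zero_eq_bot, Ideal.span_singleton_eq_bot] using hx0
  have hJ0 : J ≠ ⊥ := by
    intro h
    exact hsp (by rw [hJ, h, Ideal.mul_bot, Ideal.zero_eq_bot])
  have hnorm : (Algebra.norm ℤ x).natAbs = p ^ k * Ideal.absNorm J := by
    rw [← Ideal.absNorm_span_singleton, hJ, _root_.map_mul, map_pow, hNp]
  have hnd := aux_not_dvd_absNorm p hp P J hPm hP3 hJ0 (fun hle => hPJ (Ideal.dvd_iff_le.mpr hle))
  constructor
  · rw [hnorm]; exact Dvd.intro _ rfl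
  · intro hdvd
    rw [hnorm, pow_succ] at hdvd
    have hpk0 : p ^ k ≠ 0 := pow_ne_zero _ hp.ne_zero
    exact hnd ((mul_dvd_mul_iff_left hpk0).mp hdvd)

lemma aux_residue (p : ℕ) (hp : p.Prime) (P : Ideal (𝓞 K)) (hPne : P ≠ ⊥)
    (hNp : Ideal.absNorm P = p) (x : 𝓞 K) :
    ∃ a : ℤ, x - (a : 𝓞 K) ∈ P := by
  letI := @Fintype.ofFinite _ (Ideal.finiteQuotientOfFreeOfNeBot P hPne)
  have hcard : Nat.card (𝓞 K ⧸ P) = p := by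
    rw [← Submodule.cardQuot_apply, ← Ideal.absNorm_apply, hNp]
  have h10 : (1 : 𝓞 K ⧸ P) ≠ 0 := by
    intro h
    have : Subsingleton (𝓞 K ⧸ P) := subsingleton_iff_zero_eq_one.mp h.symm
    rw [Nat.card_of_subsingleton (0 : 𝓞 K ⧸ P)] at hcard
    exact hp.one_lt.ne' hcard.symm
  set H := AddSubgroup.zmultiples (1 : 𝓞 K ⧸ P) with hH
  have hdvd : Nat.card H ∣ p := hcard ▸ AddSubgroup.card_addSubgroup_dvd_card H
  have hne1 : Nat.card H ≠ 1 := by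
    intro h
    have hbot : H = ⊥ := AddSubgroup.card_eq_one.mp h
    have : (1 : 𝓞 K ⧸ P) ∈ H := AddSubgroup.mem_zmultiples _
    rw [hbot] at this
    exact h10 this
  have hcardH : Nat.card H = p := (hp.eq_one_or_self_of_dvd _ hdvd).resolve_left hne1
  have hHtop : H = ⊤ := AddSubgroup.eq_top_of_card_eq _ (hcardH.trans hcard.symm)
  have hmem : Ideal.Quotient.mk P x ∈ H := by rw [hHtop]; trivial
  obtain ⟨a, ha⟩ := hmem
  refine ⟨a, ?_⟩
  rw [← Ideal.Quotient.eq_zero_iff_mem, map_sub]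
  have hsmul : a • (1 : 𝓞 K ⧸ P) = Ideal.Quotient.mk P x := ha
  rw [Int.smul_one_eq_cast] at hsmul
  rw [map_intCast, hsmul]
  simp

end Aux

section NormComp

variable {K : Type} [Field K] [NumberField K]

lemma aux_norm_val (t : ℤ) (α : K)
    (hroot : α ^ 3 = ((27 * t : ℤ) : K) * α + 1)
    (B3 : Module.Basis (Fin 3) ℚ K) (hB : ∀ i : Fin 3, B3 i = α ^ (i : ℕ))
    (r s : ℤ) :
    Algebra.norm ℚ ((r : K) * α + (s : K)) = ((s ^ 3 - 27 * t * s * r ^ 2 + r ^ 3 : ℤ) : ℚ) := by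
  have h0 : B3 0 = 1 := by rw [hB]; norm_num
  have h1 : B3 1 = α := by rw [hB]; norm_num
  have h2 : B3 2 = α ^ 2 := by rw [hB]; norm_num
  have hroot' : α ^ 3 = 27 * (t : K) * α + 1 := by push_cast at hroot; exact hroot
  set x : K := (r : K) * α + (s : K) with hx
  have hc0 : x * B3 0 = (s : ℚ) • B3 0 + (r : ℚ) • B3 1 + (0 : ℚ) • B3 2 := by
    rw [h0, h1, h2]
    simp only [Rat.smul_def]
    push_cast
    ring
  have hc1 : x * B3 1 = (0 : ℚ) • B3 0 + (s : ℚ) • B3 1 + (r : ℚ) • B3 2 := by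
    rw [h0, h1, h2]
    simp only [Rat.smul_def]
    push_cast
    ring
  have hc2 : x * B3 2 = ((r : ℚ)) • B3 0 + ((27 * t * r : ℤ) : ℚ) • B3 1 + (s : ℚ) • B3 2 := by
    rw [h0, h1, h2]
    simp only [Rat.smul_def]
    push_cast
    linear_combination (r : K) * hroot'
  have hrepr : ∀ (j : Fin 3) (u v w : ℚ),
      B3.repr (u • B3 0 + v • B3 1 + w • B3 2) j = ![u, v, w] j := by
    intro j u v w
    rw [map_add, map_add, map_smul, map_smul, map_smul, B3.repr_self, B3.repr_self, B3.repr_self]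
    fin_cases j <;> simp
  rw [Algebra.norm_eq_matrix_det B3, Matrix.det_fin_three]
  simp only [Algebra.leftMulMatrix_eq_repr_mul]
  rw [hc0, hc1, hc2, hrepr, hrepr, hrepr, hrepr, hrepr, hrepr, hrepr, hrepr, hrepr]
  simp only [Matrix.cons_val_zero, Matrix.cons_val_one, Matrix.head_cons, Matrix.cons_val_two,
    Matrix.tail_cons]
  push_cast
  ring

end NormComp

open IntermediateField in
/-- Let `t ≥ 1` be an integer, let `α` be a root of the irreducible polynomial
`f(X) = X³ − 27tX − 1`, and let `K = ℚ(α)`.  Then no rational prime `p` is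
totally ramified in `K` (i.e. there is no prime ideal `P` of `𝓞 K` with
`p·𝓞 K = P³`). -/
theorem stmt_12 (t : ℤ) (ht : 1 ≤ t)
    (K : Type) [Field K] [NumberField K] (α : K)
    (hroot : α ^ 3 - ((27 * t : ℤ) : K) * α - 1 = 0)
    (htop : IntermediateField.adjoin ℚ {α} = ⊤) :
    ∀ p : ℕ, p.Prime →
      ¬ ∃ P : Ideal (𝓞 K), P.IsPrime ∧
          Ideal.span {(p : 𝓞 K)} = P ^ 3 := by
  rintro p hp ⟨P, hPp, hP3⟩
  have hroot' : α ^ 3 = ((27 * t : ℤ) : K) * α + 1 := by linear_combination hroot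
  have hrootc : α ^ 3 - 27 * (t : K) * α - 1 = 0 := by
    push_cast at hroot
    exact hroot
  -- basic objects
  have hp0 : ((p : ℕ) : 𝓞 K) ≠ 0 := Nat.cast_ne_zero.mpr hp.ne_zero
  have hPne : P ≠ ⊥ := by
    intro h
    have hsp : Ideal.span {((p : ℕ) : 𝓞 K)} = ⊥ := by
      rw [hP3, h, ← Ideal.zero_eq_bot, zero_pow (by norm_num : (3 : ℕ) ≠ 0)]
    exact hp0 (Ideal.span_singleton_eq_bot.mp hsp)
  have hPm : P.IsMaximal := hPp.isMaximal hPne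
  have hPrime : Prime P := Ideal.prime_of_isPrime hPne hPp
  have hpZ : Prime (p : ℤ) := Nat.prime_iff_prime_int.mp hp
  -- α is an algebraic integer
  have hα_int : IsIntegral ℤ α := by
    refine ⟨X ^ 3 - C (27 * t) * X - C 1, ?_, ?_⟩
    · monicity!
    · rw [← Polynomial.aeval_def]
      simp only [map_sub, _root_.map_mul, map_pow, aeval_X, aeval_C]
      simp only [algebraMap_int_eq, eq_intCast, Int.cast_one]
      push_cast
      linear_combination hrootc
  set αO : 𝓞 K := ⟨α, hα_int⟩ with hαOdef
  have hαOcoe : (αO : K) = α := rfl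
  have hcoeInt : ∀ n : ℤ, ((n : 𝓞 K) : K) = (n : K) := fun n =>
    map_intCast (algebraMap (𝓞 K) K) n
  have hαO3 : αO ^ 3 = ((27 * t : ℤ) : 𝓞 K) * αO + 1 := by
    apply NumberField.RingOfIntegers.ext
    show algebraMap (𝓞 K) K _ = algebraMap (𝓞 K) K _
    rw [map_add, _root_.map_mul, map_pow, map_one, map_intCast]
    show α ^ 3 = ((27 * t : ℤ) : K) * α + 1
    exact hroot'
  -- dimension bookkeeping
  have hint : IsIntegral ℚ α := IsIntegral.of_finite ℚ α
  have hd1 : 1 ≤ Module.finrank ℚ K := Module.finrank_pos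
  have hfr : Module.finrank ℚ K = (minpoly ℚ α).natDegree := by
    have h := IntermediateField.adjoin.finrank hint
    rw [htop] at h
    rw [← h]
    exact (LinearEquiv.finrank_eq
      (IntermediateField.topEquiv (F := ℚ) (E := K)).toLinearEquiv).symm
  have hdle : Module.finrank ℚ K ≤ 3 := by
    rw [hfr]
    have haev : (Polynomial.aeval α) (X ^ 3 - C ((27 * t : ℤ) : ℚ) * X - C 1) = 0 := by
      simp only [map_sub, _root_.map_mul, map_pow, aeval_X, aeval_C]
      simp only [eq_ratCast]
      push_cast
      linear_combination hrootc
    have hfq0 : (X ^ 3 - C ((27 * t : ℤ) : ℚ) * X - C 1 : ℚ[X]) ≠ 0 := by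
      intro h
      have h3 : (X ^ 3 - C ((27 * t : ℤ) : ℚ) * X - C 1 : ℚ[X]).natDegree = 3 := by
        compute_degree!
      rw [h] at h3
      simp at h3
    have := Polynomial.natDegree_le_of_dvd (minpoly.dvd ℚ α haev) hfq0
    have h3 : (X ^ 3 - C ((27 * t : ℤ) : ℚ) * X - C 1 : ℚ[X]).natDegree = 3 := by
      compute_degree!
    omega
  -- absNorm of P and the degree
  have hNp3 : (Ideal.absNorm P) ^ 3 = p ^ (Module.finrank ℚ K) := by
    have h1 : Ideal.absNorm (P ^ 3) = (Ideal.absNorm P) ^ 3 := map_pow _ _ _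
    rw [← hP3, Ideal.absNorm_span_singleton] at h1
    have h2 : ((Algebra.norm ℤ ((p : ℕ) : 𝓞 K) : ℤ) : ℚ)
        = (p : ℚ) ^ (Module.finrank ℚ K) := by
      rw [Algebra.coe_norm_int]
      have hcast : (((p : ℕ) : 𝓞 K) : K) = algebraMap ℚ K ((p : ℕ) : ℚ) := by
        push_cast
        simp
      rw [hcast, Algebra.norm_algebraMap]
    have h3 : (Algebra.norm ℤ ((p : ℕ) : 𝓞 K)) = (p : ℤ) ^ (Module.finrank ℚ K) := by
      exact_mod_cast h2
    rw [h3] at h1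
    rw [← h1]
    simp [Int.natAbs_pow]
  have hNppow : Ideal.absNorm P ∣ p ^ Module.finrank ℚ K :=
    ⟨(Ideal.absNorm P) ^ 2, by rw [← hNp3]; ring⟩
  obtain ⟨i, hi_le, hNi⟩ := (Nat.dvd_prime_pow hp).mp hNppow
  have hi1 : i ≠ 0 := by
    intro h
    rw [h, pow_zero] at hNi
    exact hPm.ne_top (Ideal.absNorm_eq_one_iff.mp hNi)
  have h3i : 3 * i = Module.finrank ℚ K := by
    apply Nat.pow_right_injective hp.two_le
    calc p ^ (3 * i) = (p ^ i) ^ 3 := by ring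
      _ = (Ideal.absNorm P) ^ 3 := by rw [hNi]
      _ = p ^ (Module.finrank ℚ K) := hNp3
  have hd3 : Module.finrank ℚ K = 3 := by omega
  have hNp : Ideal.absNorm P = p := by
    have hi : i = 1 := by omega
    rw [hNi, hi, pow_one]
  -- power basis
  let pb : PowerBasis ℚ K := (IntermediateField.adjoin.powerBasis hint).map
    ((IntermediateField.equivOfEq htop).trans IntermediateField.topEquiv)
  have hpbgen : pb.gen = α := by
    simp [pb, IntermediateField.adjoin.powerBasis_gen]
  have hpbdim : pb.dim = 3 := by
    rw [← pb.finrank]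
    exact hd3
  let B3 : Module.Basis (Fin 3) ℚ K := pb.basis.reindex (finCongr hpbdim)
  have hB3 : ∀ i : Fin 3, B3 i = α ^ (i : ℕ) := by
    intro i
    rw [Module.Basis.reindex_apply, PowerBasis.coe_basis, hpbgen]
    congr 1
  have hNorm := aux_norm_val t α hroot' B3 hB3
  have hNormO : ∀ (x : 𝓞 K) (r s : ℤ), (x : K) = (r : K) * α + (s : K) →
      Algebra.norm ℤ x = s ^ 3 - 27 * t * s * r ^ 2 + r ^ 3 := by
    intro x r s hx
    have h := Algebra.coe_norm_int x
    rw [hx, hNorm r s] at h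
    exact_mod_cast h
  -- residue tools
  have hres := aux_res_int p hp P hPp hP3
  have hdvd_iff : ∀ (j : ℕ) (n : ℤ), ((p : ℤ) ^ j ∣ n ↔ p ^ j ∣ n.natAbs) := by
    intro j n
    rw [show ((p : ℤ) ^ j) = ((p ^ j : ℕ) : ℤ) by push_cast; ring, Int.natCast_dvd]
  obtain ⟨a₀, ha₀⟩ := aux_residue p hp P hPne hNp αO
  have hIdentity : ∀ a : ℤ, ((a ^ 3 - 27 * t * a - 1 : ℤ) : 𝓞 K)
      = ((a : 𝓞 K) - αO) * (αO ^ 2 + (a : 𝓞 K) * αO + ((a ^ 2 - 27 * t : ℤ) : 𝓞 K)) := by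
    intro a
    have h := hαO3
    push_cast at h ⊢
    linear_combination h
  have hpfa : ∀ a : ℤ, (αO - (a : 𝓞 K)) ∈ P → (p : ℤ) ∣ (a ^ 3 - 27 * t * a - 1) := by
    intro a ha
    apply (hres _).mp
    rw [hIdentity a]
    refine P.mul_mem_right _ ?_
    have := P.neg_mem ha
    simpa using this
  have hBne : ∀ a : ℤ, a ^ 3 - 27 * t * a - 1 ≠ 0 := by
    intro a h
    have hmul : a * (a ^ 2 - 27 * t) = 1 := by linear_combination h
    rcases Int.isUnit_iff.mp (IsUnit.of_mul_eq_one _ hmul) with rfl | rfl <;> omega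
  have hβne : ∀ a : ℤ, αO - (a : 𝓞 K) ≠ 0 := by
    intro a h
    have heq : αO = (a : 𝓞 K) := by
      have := sub_eq_zero.mp h
      exact this
    have h3 := hαO3
    rw [heq] at h3
    have h4 : ((a ^ 3 - 27 * t * a - 1 : ℤ) : 𝓞 K) = 0 := by
      push_cast at h3 ⊢
      linear_combination h3
    exact hBne a (by exact_mod_cast h4)
  -- the two cases
  by_cases hp3 : p = 3
  · -- p = 3
    subst hp3
    have ha0mod : (3 : ℤ) ∣ (a₀ - 1) := by
      have h := hpfa a₀ ha₀
      have hz : ((a₀ : ZMod 3)) ^ 3 - 27 * (t : ZMod 3) * (a₀ : ZMod 3) - 1 = 0 := by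
        have := (ZMod.intCast_zmod_eq_zero_iff_dvd (a₀ ^ 3 - 27 * t * a₀ - 1) 3).mpr
          (by exact_mod_cast h)
        push_cast at this
        linear_combination this
      have : ((a₀ - 1 : ℤ) : ZMod 3) = 0 := by
        push_cast
        revert hz
        generalize (a₀ : ZMod 3) = z
        generalize (t : ZMod 3) = w
        revert z w
        decide
      exact (ZMod.intCast_zmod_eq_zero_iff_dvd _ 3).mp this
    set β : 𝓞 K := αO - 1 with hβdef
    have hβP : β ∈ P := by
      obtain ⟨k, hk⟩ := ha0mod
      have h2 : ((a₀ - 1 : ℤ) : 𝓞 K) ∈ P := by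
        rw [hk]
        push_cast
        exact P.mul_mem_right _ (by exact_mod_cast (hres 3).mpr ⟨1, by ring⟩)
      have h3 := P.add_mem ha₀ h2
      have : αO - (a₀ : 𝓞 K) + ((a₀ - 1 : ℤ) : 𝓞 K) = β := by
        push_cast
        ring
      rwa [this] at h3
    have hβ0 : β ≠ 0 := by
      have := hβne 1
      simpa using this
    obtain ⟨m, hm1, hm2⟩ := aux_val_exists P hPrime hβ0
    have hmge1 : 1 ≤ m := by
      by_contra h
      have hm0 : m = 0 := by omega
      rw [hm0] at hm2
      exact hm2 (by simpa using hβP)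
    have hNβ : Algebra.norm ℤ β = 27 * t := by
      have h := hNormO β 1 (-1) (by push_cast [hβdef, hαOcoe]; ring)
      rw [h]; ring
    have hNF := aux_NF 3 hp P hPrime hPm hP3 hNp hm1 hm2
    rw [hNβ] at hNF
    have hB1 : (3 : ℤ) ^ m ∣ (-(27 * t)) := by
      rw [dvd_neg]
      exact (hdvd_iff m (27 * t)).mpr hNF.1
    have hB2 : ¬ (3 : ℤ) ^ (m + 1) ∣ (-(27 * t)) := by
      rw [dvd_neg]
      exact fun h => hNF.2 ((hdvd_iff (m + 1) (27 * t)).mp h)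
    have hm3 : 3 ≤ m := by
      by_contra hlt
      apply hNF.2
      have hle3 : m + 1 ≤ 3 := by omega
      calc (3 : ℕ) ^ (m + 1) ∣ 3 ^ 3 := pow_dvd_pow _ hle3
        _ ∣ (27 * t).natAbs := by
            rw [Int.natAbs_mul]
            exact ⟨t.natAbs, by norm_num⟩
    have hEA := aux_int_val 3 hp P hPp hPrime hP3 (3 - 27 * t) 1
      ⟨1 - 9 * t, by ring⟩ (by rintro ⟨c, hc⟩; omega)
    have hEAβ := aux_val_mul P hPrime hEA.1 hEA.2 hm1 hm2
    have hEB := aux_int_val 3 hp P hPp hPrime hP3 (-(27 * t)) m hB1 hB2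
    have hE3 := aux_int_val 3 hp P hPp hPrime hP3 3 1 ⟨1, by ring⟩
      (by rintro ⟨c, hc⟩; omega)
    have hEq : ((3 - 27 * t : ℤ) : 𝓞 K) * β
        = -(β ^ 3 + 3 * β ^ 2 + ((-(27 * t) : ℤ) : 𝓞 K)) := by
      have h := hαO3
      push_cast at h ⊢
      linear_combination h
    apply hEAβ.2
    rw [hEq]
    apply neg_mem
    have ht1 : β ^ 3 ∈ P ^ (3 * 1 + m + 1) := by
      have hmem : β ^ 3 ∈ (P ^ m) ^ 3 := pow_mem_pow hm1 3
      rw [← pow_mul] at hmem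
      exact Ideal.pow_le_pow_right (by omega) hmem
    have ht2 : 3 * β ^ 2 ∈ P ^ (3 * 1 + m + 1) := by
      have h3mem : (3 : 𝓞 K) ∈ P ^ (3 * 1) := by exact_mod_cast hE3.1
      have hβ2 : β ^ 2 ∈ (P ^ m) ^ 2 := pow_mem_pow hm1 2
      rw [← pow_mul] at hβ2
      have hmul := Ideal.mul_mem_mul h3mem hβ2
      rw [← pow_add] at hmul
      exact Ideal.pow_le_pow_right (by omega) hmul
    have ht3 : ((-(27 * t) : ℤ) : 𝓞 K) ∈ P ^ (3 * 1 + m + 1) :=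
      Ideal.pow_le_pow_right (by omega) hEB.1
    exact add_mem (add_mem ht1 ht2) ht3
  · -- p ≠ 3
    set a := a₀ with hadef
    set A : ℤ := 3 * a ^ 2 - 27 * t with hAdef
    set B : ℤ := a ^ 3 - 27 * t * a - 1 with hBdef
    have hpB : (p : ℤ) ∣ B := hpfa a ha₀
    have hpa : ¬ (p : ℤ) ∣ a := by
      intro h
      have h1 : (p : ℤ) ∣ a * (a ^ 2 - 27 * t) - B := dvd_sub (h.mul_right _) hpB
      have h2 : a * (a ^ 2 - 27 * t) - B = 1 := by rw [hBdef]; ring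
      rw [h2] at h1
      have := Int.le_of_dvd one_pos h1
      have h2le := hp.two_le
      omega
    have hpd3 : ¬ (p : ℤ) ∣ 3 := by
      intro h
      have h1 : p ∣ 3 := by exact_mod_cast h
      rcases (Nat.prime_dvd_prime_iff_eq hp (by norm_num)).mp h1 with h2
      exact hp3 h2
    have hpa3 : ¬ (p : ℤ) ∣ 3 * a := by
      intro h
      rcases hpZ.dvd_mul.mp h with h | h
      exacts [hpd3 h, hpa h]
    set β : 𝓞 K := αO - (a : 𝓞 K) with hβdef
    have hβ0 : β ≠ 0 := hβne a
    obtain ⟨m, hm1, hm2⟩ := aux_val_exists P hPrime hβ0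
    have hmge1 : 1 ≤ m := by
      by_contra h
      have hm0 : m = 0 := by omega
      rw [hm0] at hm2
      exact hm2 (by simpa using ha₀)
    have hNβ : Algebra.norm ℤ β = -B := by
      have h := hNormO β 1 (-a) (by push_cast [hβdef, hαOcoe, hcoeInt]; ring)
      rw [h, hBdef]; ring
    have hNF := aux_NF p hp P hPrime hPm hP3 hNp hm1 hm2
    rw [hNβ] at hNF
    have hNF1 := hNF.1
    have hNF2 := hNF.2
    rw [Int.natAbs_neg] at hNF1 hNF2
    have hBm1 : (p : ℤ) ^ m ∣ B := (hdvd_iff m B).mpr hNF1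
    have hBm2 : ¬ (p : ℤ) ^ (m + 1) ∣ B := fun h => hNF2 ((hdvd_iff (m + 1) B).mp h)
    have hEB := aux_int_val p hp P hPp hPrime hP3 B m hBm1 hBm2
    have hEqGen : β ^ 3 + ((3 * a : ℤ) : 𝓞 K) * β ^ 2 + ((A : ℤ) : 𝓞 K) * β
        + ((B : ℤ) : 𝓞 K) = 0 := by
      have h := hαO3
      rw [hAdef, hBdef, hβdef]
      push_cast at h ⊢
      linear_combination h
    by_cases hcA : (p : ℤ) ∣ A
    · by_cases hA0 : A = 0
      · have hE3a := aux_int_val p hp P hPp hPrime hP3 (3 * a) 0 (by simp)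
          (by simpa using hpa3)
        have hEβ2 := aux_val_mul P hPrime hm1 hm2 hm1 hm2
        have hkey := aux_val_mul P hPrime hE3a.1 hE3a.2 hEβ2.1 hEβ2.2
        apply hkey.2
        have hA0' : ((A : ℤ) : 𝓞 K) = 0 := by rw [hA0]; exact Int.cast_zero
        have hrw : ((3 * a : ℤ) : 𝓞 K) * (β * β) = -(β ^ 3 + ((B : ℤ) : 𝓞 K)) := by
          linear_combination hEqGen - β * hA0'
        rw [hrw]
        apply neg_mem
        have h1 : β ^ 3 ∈ P ^ (3 * 0 + (m + m) + 1) := by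
          have h3 : β ^ 3 ∈ (P ^ m) ^ 3 := pow_mem_pow hm1 3
          rw [← pow_mul] at h3
          exact Ideal.pow_le_pow_right (by omega) h3
        have h2 : ((B : ℤ) : 𝓞 K) ∈ P ^ (3 * 0 + (m + m) + 1) :=
          Ideal.pow_le_pow_right (by omega) hEB.1
        exact add_mem h1 h2
      · obtain ⟨u, hu, hpu⟩ :=
          (FiniteMultiplicity.of_prime_left hpZ hA0).exists_eq_pow_mul_and_not_dvd
        set c := multiplicity ((p : ℕ) : ℤ) A with hcdef
        have hc1 : (p : ℤ) ^ c ∣ A := ⟨u, hu⟩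
        have hc2 : ¬ (p : ℤ) ^ (c + 1) ∣ A := by
          rintro ⟨v, hv⟩
          apply hpu
          refine ⟨v, ?_⟩
          have hpc0 : (p : ℤ) ^ c ≠ 0 := pow_ne_zero _ (by exact_mod_cast hp.ne_zero)
          apply mul_left_cancel₀ hpc0
          rw [← hu, hv]; ring
        have hcge1 : 1 ≤ c := by
          by_contra h
          have hc0 : c = 0 := by omega
          apply hpu
          rw [← one_mul u, ← pow_zero ((p : ℕ) : ℤ), ← hc0, ← hu]
          exact hcA
        have hEA := aux_int_val p hp P hPp hPrime hP3 A c hc1 hc2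
        rcases lt_trichotomy m (3 * c) with hmc | hmc | hmc
        · have hE3a := aux_int_val p hp P hPp hPrime hP3 (3 * a) 0 (by simp)
            (by simpa using hpa3)
          have hEβ2 := aux_val_mul P hPrime hm1 hm2 hm1 hm2
          have hkey := aux_val_mul P hPrime hE3a.1 hE3a.2 hEβ2.1 hEβ2.2
          apply hkey.2
          have hrw : ((3 * a : ℤ) : 𝓞 K) * (β * β)
              = -(β ^ 3 + ((A : ℤ) : 𝓞 K) * β + ((B : ℤ) : 𝓞 K)) := by
            linear_combination hEqGen
          rw [hrw]
          apply neg_mem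
          have h1 : β ^ 3 ∈ P ^ (3 * 0 + (m + m) + 1) := by
            have h3 : β ^ 3 ∈ (P ^ m) ^ 3 := pow_mem_pow hm1 3
            rw [← pow_mul] at h3
            exact Ideal.pow_le_pow_right (by omega) h3
          have h2 : ((A : ℤ) : 𝓞 K) * β ∈ P ^ (3 * 0 + (m + m) + 1) := by
            have hmm := Ideal.mul_mem_mul hEA.1 hm1
            rw [← pow_add] at hmm
            exact Ideal.pow_le_pow_right (by omega) hmm
          have h3 : ((B : ℤ) : 𝓞 K) ∈ P ^ (3 * 0 + (m + m) + 1) :=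
            Ideal.pow_le_pow_right (by omega) hEB.1
          exact add_mem (add_mem h1 h2) h3
        · have hEAβ := aux_val_mul P hPrime hEA.1 hEA.2 hm1 hm2
          set ξ : 𝓞 K := ((A : ℤ) : 𝓞 K) * β + ((B : ℤ) : 𝓞 K) with hξdef
          have hBhigh : ((B : ℤ) : 𝓞 K) ∈ P ^ (3 * c + m + 1) :=
            Ideal.pow_le_pow_right (by omega) hEB.1
          have hξ1 : ξ ∈ P ^ (3 * c + m) :=
            add_mem hEAβ.1 (Ideal.pow_le_pow_right (by omega) hEB.1)
          have hξ2 : ξ ∉ P ^ (3 * c + m + 1) := by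
            intro h
            apply hEAβ.2
            have hAB : ((A : ℤ) : 𝓞 K) * β = ξ - ((B : ℤ) : 𝓞 K) := by
              rw [hξdef]; ring
            rw [hAB]
            exact sub_mem h hBhigh
          have hNFξ := aux_NF p hp P hPrime hPm hP3 hNp hξ1 hξ2
          have hNξ : Algebra.norm ℤ ξ = B ^ 2 * (B - 3 * a * A) := by
            have h := hNormO ξ A (B - a * A)
              (by push_cast [hξdef, hβdef, hαOcoe, hcoeInt]; ring)
            rw [h, hAdef, hBdef]; ring
          rw [hNξ] at hNFξ
          apply hNFξ.2
          have hdvd1 : (p : ℤ) ^ (3 * c + m) ∣ B ^ 2 := by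
            have h2 : (p : ℤ) ^ (m + m) ∣ B ^ 2 := by
              rw [pow_add, sq]
              exact mul_dvd_mul hBm1 hBm1
            exact dvd_trans (pow_dvd_pow _ (by omega)) h2
          have hdvd2 : (p : ℤ) ∣ (B - 3 * a * A) := dvd_sub hpB (hcA.mul_left _)
          have hfinal : (p : ℤ) ^ (3 * c + m + 1) ∣ B ^ 2 * (B - 3 * a * A) := by
            rw [pow_succ]
            exact mul_dvd_mul hdvd1 hdvd2
          exact (hdvd_iff _ _).mp hfinal
        · have hkey := aux_val_mul P hPrime hEA.1 hEA.2 hm1 hm2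
          apply hkey.2
          have hrw : ((A : ℤ) : 𝓞 K) * β
              = -(β ^ 3 + ((3 * a : ℤ) : 𝓞 K) * β ^ 2 + ((B : ℤ) : 𝓞 K)) := by
            linear_combination hEqGen
          rw [hrw]
          apply neg_mem
          have h1 : β ^ 3 ∈ P ^ (3 * c + m + 1) := by
            have h3 : β ^ 3 ∈ (P ^ m) ^ 3 := pow_mem_pow hm1 3
            rw [← pow_mul] at h3
            exact Ideal.pow_le_pow_right (by omega) h3
          have h2 : ((3 * a : ℤ) : 𝓞 K) * β ^ 2 ∈ P ^ (3 * c + m + 1) := by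
            have hβ2 : β ^ 2 ∈ (P ^ m) ^ 2 := pow_mem_pow hm1 2
            rw [← pow_mul] at hβ2
            have hmm := Ideal.mul_mem_left _ (((3 * a : ℤ) : 𝓞 K)) hβ2
            exact Ideal.pow_le_pow_right (by omega) hmm
          have h3 : ((B : ℤ) : 𝓞 K) ∈ P ^ (3 * c + m + 1) :=
            Ideal.pow_le_pow_right (by omega) hEB.1
          exact add_mem (add_mem h1 h2) h3
    · have hEA := aux_int_val p hp P hPp hPrime hP3 A 0 (by simp) (by simpa using hcA)
      have hkey := aux_val_mul P hPrime hEA.1 hEA.2 hm1 hm2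
      apply hkey.2
      have hrw : ((A : ℤ) : 𝓞 K) * β
          = -(β ^ 3 + ((3 * a : ℤ) : 𝓞 K) * β ^ 2 + ((B : ℤ) : 𝓞 K)) := by
        linear_combination hEqGen
      rw [hrw]
      apply neg_mem
      have h1 : β ^ 3 ∈ P ^ (3 * 0 + m + 1) := by
        have h3 : β ^ 3 ∈ (P ^ m) ^ 3 := pow_mem_pow hm1 3
        rw [← pow_mul] at h3
        exact Ideal.pow_le_pow_right (by omega) h3
      have h2 : ((3 * a : ℤ) : 𝓞 K) * β ^ 2 ∈ P ^ (3 * 0 + m + 1) := by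
        have hβ2 : β ^ 2 ∈ (P ^ m) ^ 2 := pow_mem_pow hm1 2
        rw [← pow_mul] at hβ2
        have hmm := Ideal.mul_mem_left _ (((3 * a : ℤ) : 𝓞 K)) hβ2
        exact Ideal.pow_le_pow_right (by omega) hmm
      have h3 : ((B : ℤ) : 𝓞 K) ∈ P ^ (3 * 0 + m + 1) :=
        Ideal.pow_le_pow_right (by omega) hEB.1
      exact add_mem (add_mem h1 h2) h3
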